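/- Let (X_k) be r independent Bernoulli(f) random variables (0 < f < 1) on a finite probability space, counting rounds in which a particle is delayed, and let q satisfy f ≤ q ≤ 1. Then P(∑_k X_k > q·r) ≤ ((f·e/q)^q / e^f)^r. -/

import Mathlib

open MeasureTheory ProbabilityTheory

/-- Chernoff bound on the number of delayed rounds: for r independent
Bernoulli(f) indicators X_k and f ≤ q ≤ 1, the probability that more than
qr of the rounds see a delay is at most ((fe/q)^q / e^f)^r. -/
theorem stmt_17 {Ω : Type*} [Fintype Ω] [MeasurableSpace Ω]
    (μ : Measure Ω) [IsProbabilityMeasure μ]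
    (r : ℕ) (f q : ℝ) (hf0 : 0 < f) (hf1 : f < 1)
    (hfq : f ≤ q) (hq1 : q ≤ 1)
    (X : Fin r → Ω → ℝ)
    (hmeas : ∀ k, Measurable (X k))
    (hBool : ∀ k ω, X k ω = 0 ∨ X k ω = 1)
    (hBern : ∀ k, μ {ω | X k ω = 1} = ENNReal.ofReal f)
    (hind : iIndepFun X μ) :
    (μ {ω | q * r < ∑ k, X k ω}).toReal ≤
      ((f * Real.exp 1 / q) ^ q / Real.exp f) ^ r := by
  have hq0 : 0 < q := lt_of_lt_of_le hf0 hfq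
  set t : ℝ := Real.log (q / f) with ht_def
  have hqf1 : (1:ℝ) ≤ q / f := (one_le_div hf0).mpr hfq
  have ht0 : 0 ≤ t := Real.log_nonneg hqf1
  have hexpt : Real.exp t = q / f := Real.exp_log (by positivity)
  -- integrability of exp (t * X k)
  have hXint : ∀ k, Integrable (fun ω => Real.exp (t * X k ω)) μ := by
    intro k
    refine (integrable_const (Real.exp t)).mono'
      ((hmeas k).const_mul t).exp.aestronglyMeasurable
      (Filter.Eventually.of_forall fun ω => ?_)
    rw [Real.norm_eq_abs, Real.abs_exp, Real.exp_le_exp]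
    rcases hBool k ω with h | h <;> simp [h] <;> nlinarith [Real.log_nonneg hqf1]
  -- integrability of X k
  have hXint' : ∀ k, Integrable (X k) μ := by
    intro k
    refine (integrable_const (1:ℝ)).mono' (hmeas k).aestronglyMeasurable
      (Filter.Eventually.of_forall fun ω => ?_)
    rcases hBool k ω with h | h <;> simp [h]
  -- E[X k] = f
  have hEX : ∀ k, μ[X k] = f := by
    intro k
    have hset : MeasurableSet {ω | X k ω = 1} := (hmeas k) (measurableSet_singleton 1)
    have : X k = Set.indicator {ω | X k ω = 1} (fun _ => (1:ℝ)) := by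
      funext ω
      rcases hBool k ω with h | h
      · rw [h, Set.indicator_of_notMem]
        simp [Set.mem_setOf_eq, h]
      · rw [h, Set.indicator_of_mem]
        exact h
    rw [this, integral_indicator_const _ hset, measureReal_def, hBern k, smul_eq_mul, mul_one,
      ENNReal.toReal_ofReal hf0.le]
  -- mgf of each X k
  have hmgf : ∀ k, mgf (X k) μ t = 1 + f * (Real.exp t - 1) := by
    intro k
    have hpt : (fun ω => Real.exp (t * X k ω))
        = fun ω => 1 + (Real.exp t - 1) * X k ω := by
      funext ω
      rcases hBool k ω with h | h <;> simp [h]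
    rw [mgf, hpt]
    rw [integral_add (integrable_const 1) ((hXint' k).const_mul _),
      integral_const_mul, integral_const, hEX k]
    simp [mul_comm]
  -- Chernoff
  have hSint : Integrable (fun ω => Real.exp (t * (∑ k, X k ω))) μ := by
    have := ProbabilityTheory.iIndepFun.integrable_exp_mul_sum (t := t) hind hmeas
      (s := Finset.univ) (fun k _ => hXint k)
    simpa using this
  have hch := measure_ge_le_exp_mul_mgf (μ := μ) (X := fun ω => ∑ k, X k ω)
    (q * r) ht0 hSint
  have hmono : (μ {ω | q * r < ∑ k, X k ω}).toReal
      ≤ (μ {ω | q * r ≤ ∑ k, X k ω}).toReal := by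
    apply ENNReal.toReal_mono (measure_ne_top _ _)
    exact measure_mono (Set.setOf_subset_setOf.mpr fun ω h => le_of_lt h)
  have hmgfS : mgf (fun ω => ∑ k, X k ω) μ t = (1 + f * (Real.exp t - 1)) ^ r := by
    have := hind.mgf_sum (t := t) hmeas Finset.univ
    simp only [hmgf] at this
    rw [show (fun ω => ∑ k, X k ω) = ∑ k, X k from (by funext ω; simp)]
    rw [this]
    simp
  have hbase0 : 0 ≤ 1 + f * (Real.exp t - 1) := by nlinarith [Real.exp_pos t, hexpt]
  have hx : f * (Real.exp t - 1) = q - f := by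
    rw [hexpt]; field_simp
  have hbound : (1 + f * (Real.exp t - 1)) ^ r ≤ Real.exp (q - f) ^ r := by
    apply pow_le_pow_left₀ hbase0
    rw [hx]
    linarith [Real.add_one_le_exp (q - f)]
  have key : (μ {ω | q * r ≤ ∑ k, X k ω}).toReal
      ≤ Real.exp (-t * (q * r)) * Real.exp (q - f) ^ r := by
    refine hch.trans ?_
    rw [hmgfS]
    exact mul_le_mul_of_nonneg_left hbound (Real.exp_pos _).le
  refine (hmono.trans key).trans_eq ?_
  rw [← Real.exp_nat_mul, ← Real.exp_add]
  rw [show -t * (q * r) + r * (q - f) = r * (-(t * q) + (q - f)) by ring]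
  rw [Real.exp_nat_mul]
  congr 1
  rw [Real.rpow_def_of_pos (by positivity), Real.log_div (by positivity) hq0.ne',
    Real.log_mul hf0.ne' (Real.exp_pos 1).ne', Real.log_exp, ht_def,
    Real.log_div hq0.ne' hf0.ne', ← Real.exp_sub]
  congr 1
  ring
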